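/- For all s, t ∈ [0,1], the set A = {r ∈ [0,1] : r ≼ s and r ≼ t} of common ≼-lower bounds of s and t is nonempty (it contains 0) and has a greatest element with respect to ≼ (equivalently, with respect to ≤); i.e. the supremum m = sup A satisfies m ∈ A, and every r ∈ A satisfies r ≼ m. This greatest element is the most recent common ancestor s∧t of s and t. -/

import Mathlib

open Set Filter

/-- The infimum `I_s^t` of `f` over the interval `[s, t]`. -/
noncomputable def infIcc (f : ℝ → ℝ) (s t : ℝ) : ℝ := sInf (f '' Set.Icc s t)

/-- The genealogical relation `s ≼ t` associated with the excursion-type function `f`,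
where `fl` is the left-limit function of `f` (with the convention `fl 0 = 0`):
`s ≼ t ↔ s ≤ t ∧ f(s-) ≤ I_s^t`. -/
def Prec (f fl : ℝ → ℝ) (s t : ℝ) : Prop := s ≤ t ∧ fl s ≤ infIcc f s t

/-- The jump `Δ_t = f(t) - f(t-)` of `f` at `t` (with the convention `fl 0 = 0`
this gives `Δ_0 = 0` for `f 0 = 0`). -/
def jump (f fl : ℝ → ℝ) (t : ℝ) : ℝ := f t - fl t

/-- The position `x_s^t = I_s^t - f(s-)` of the ancestral line of `t` in the loop at `s`. -/
noncomputable def xpos (f fl : ℝ → ℝ) (s t : ℝ) : ℝ := infIcc f s t - fl s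

/-- Distance on the cycle of length `D`: `δ_D(a,b) = min (|a-b|, D - |a-b|)`. -/
def cycleDist (D a b : ℝ) : ℝ := min |a - b| (D - |a - b|)

/-- `d₀(s,t) = ∑_{s ≺ r ≼ t} δ_{Δ_r}(0, x_r^t)`. -/
noncomputable def dZero (f fl : ℝ → ℝ) (s t : ℝ) : ℝ :=
  ∑' r : {r : ℝ // Prec f fl s r ∧ s ≠ r ∧ Prec f fl r t},
    cycleDist (jump f fl r.1) 0 (xpos f fl r.1 t)

/-- The most recent common ancestor `s ∧ t` of `s` and `t`: the greatest common
`≼`-lower bound of `s` and `t` in `[0,1]`, realized as the supremum of the set of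
common lower bounds. -/
noncomputable def mca (f fl : ℝ → ℝ) (s t : ℝ) : ℝ :=
  sSup {r : ℝ | r ∈ Set.Icc (0:ℝ) 1 ∧ Prec f fl r s ∧ Prec f fl r t}

/-- The looptree pseudo-distance
`d(s,t) = δ_{Δ_{s∧t}}(x_{s∧t}^s, x_{s∧t}^t) + d₀(s∧t, s) + d₀(s∧t, t)`. -/
noncomputable def looptreeDist (f fl : ℝ → ℝ) (s t : ℝ) : ℝ :=
  cycleDist (jump f fl (mca f fl s t)) (xpos f fl (mca f fl s t) s) (xpos f fl (mca f fl s t) t)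
    + dZero f fl (mca f fl s t) s + dZero f fl (mca f fl s t) t

/-- Auxiliary: the image of a subinterval of `[0,1]` under a nonnegative `f` is bounded below. -/
lemma aux_bddBelow (f : ℝ → ℝ) (hf_nonneg : ∀ t ∈ Set.Icc (0:ℝ) 1, 0 ≤ f t)
    (a b : ℝ) (ha : 0 ≤ a) (hb : b ≤ 1) : BddBelow (f '' Set.Icc a b) := by
  refine ⟨0, ?_⟩
  rintro y ⟨x, hx, rfl⟩
  exact hf_nonneg x ⟨le_trans ha hx.1, le_trans hx.2 hb⟩

/-- Key lemma: the supremum of a set `A` of ancestors of `s` satisfies the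
"left-limit below the infimum" condition. -/
lemma fl_sSup_le (f fl : ℝ → ℝ)
    (hf_left : ∀ t ∈ Set.Ioc (0:ℝ) 1, Filter.Tendsto f (nhdsWithin t (Set.Iio t)) (nhds (fl t)))
    (hfl0 : fl 0 = 0)
    (hf_nonneg : ∀ t ∈ Set.Icc (0:ℝ) 1, 0 ≤ f t)
    (A : Set ℝ) (hA : A ⊆ Set.Icc 0 1) (h0A : (0:ℝ) ∈ A)
    (s : ℝ) (hs1 : s ≤ 1)
    (hpre : ∀ r ∈ A, Prec f fl r s) :
    fl (sSup A) ≤ infIcc f (sSup A) s := by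
  have hAne : A.Nonempty := ⟨0, h0A⟩
  have hbdd : BddAbove A := ⟨1, fun r hr => (hA hr).2⟩
  set m := sSup A with hm
  have hm0 : 0 ≤ m := le_csSup hbdd h0A
  have hm1 : m ≤ 1 := csSup_le hAne (fun r hr => (hA hr).2)
  have hms : m ≤ s := csSup_le hAne (fun r hr => (hpre r hr).1)
  by_cases hmem : m ∈ A
  · exact (hpre m hmem).2
  have hm0' : 0 < m := by
    rcases lt_or_eq_of_le hm0 with h | h
    · exact h
    · exact absurd (h ▸ h0A) hmem
  by_contra hcon
  push_neg at hcon
  set ε := (fl m - infIcc f m s) / 2 with hε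
  have hεpos : 0 < ε := by simp only [hε]; linarith
  -- left limit at m, metric form
  obtain ⟨δ, hδpos, hδ⟩ := Metric.tendsto_nhdsWithin_nhds.mp (hf_left m ⟨hm0', hm1⟩) ε hεpos
  set b := max (m - δ) 0 with hb
  have hbm : b < m := max_lt (by linarith) hm0'
  obtain ⟨r, hrA, hbr⟩ := exists_lt_of_lt_csSup hAne hbm
  have hrm : r ≤ m := le_csSup hbdd hrA
  have hrm' : r < m := lt_of_le_of_ne hrm (fun h => hmem (h ▸ hrA))
  have hr0 : 0 < r := lt_of_le_of_lt (le_max_right _ _) hbr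
  have hr1 : r ≤ 1 := (hA hrA).2
  -- left limit at r
  have hlr := hf_left r ⟨hr0, hr1⟩
  have hev : ∀ᶠ u in nhdsWithin r (Set.Iio r), dist (f u) (fl r) < ε :=
    Metric.tendsto_nhds.mp hlr ε hεpos
  have hIoo : Set.Ioo b r ∈ nhdsWithin r (Set.Iio r) := Ioo_mem_nhdsLT hbr
  obtain ⟨u, hu1, hu2⟩ := (hev.and (Filter.eventually_mem_set.mpr hIoo)).exists
  -- u is close to m as well
  have hum : u < m := lt_trans hu2.2 hrm'
  have hudist : dist u m < δ := by
    rw [Real.dist_eq, abs_lt]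
    constructor
    · have : m - δ ≤ b := le_max_left _ _
      linarith [hu2.1]
    · linarith
  have hu3 : dist (f u) (fl m) < ε := hδ hum hudist
  -- chain of inequalities
  have h1 : fl r ≤ infIcc f r s := (hpre r hrA).2
  have h2 : infIcc f r s ≤ infIcc f m s := by
    apply csInf_le_csInf (aux_bddBelow f hf_nonneg r s hr0.le hs1)
    · exact ⟨f m, ⟨m, ⟨le_refl m, hms⟩, rfl⟩⟩
    · exact Set.image_mono (Set.Icc_subset_Icc_left hrm)
  rw [Real.dist_eq, abs_lt] at hu1 hu3
  simp only [hε] at hu1 hu3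
  linarith [hu1.1, hu1.2, hu3.1, hu3.2]

/-- for all s, t ∈ [0,1], the set of common ≼-lower bounds of s and t
contains 0, and its supremum is a greatest element of it with respect to ≼. -/
theorem exists_mostRecentCommonAncestor (f fl : ℝ → ℝ)
    (hf_right : ∀ t ∈ Set.Ico (0:ℝ) 1, Filter.Tendsto f (nhdsWithin t (Set.Ici t)) (nhds (f t)))
    (hf_left : ∀ t ∈ Set.Ioc (0:ℝ) 1, Filter.Tendsto f (nhdsWithin t (Set.Iio t)) (nhds (fl t)))
    (hfl0 : fl 0 = 0)
    (hf_nonneg : ∀ t ∈ Set.Icc (0:ℝ) 1, 0 ≤ f t)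
    (hf_jump : ∀ t ∈ Set.Icc (0:ℝ) 1, fl t ≤ f t)
    (hf0 : f 0 = 0) (hf1 : f 1 = 0)
    (s t : ℝ) (hs : s ∈ Set.Icc (0:ℝ) 1) (ht : t ∈ Set.Icc (0:ℝ) 1) :
    (0:ℝ) ∈ {r : ℝ | r ∈ Set.Icc (0:ℝ) 1 ∧ Prec f fl r s ∧ Prec f fl r t} ∧
    mca f fl s t ∈ {r : ℝ | r ∈ Set.Icc (0:ℝ) 1 ∧ Prec f fl r s ∧ Prec f fl r t} ∧
    ∀ r ∈ {r : ℝ | r ∈ Set.Icc (0:ℝ) 1 ∧ Prec f fl r s ∧ Prec f fl r t},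
      Prec f fl r (mca f fl s t) := by

  set A := {r : ℝ | r ∈ Set.Icc (0:ℝ) 1 ∧ Prec f fl r s ∧ Prec f fl r t} with hA
  have hAsub : A ⊆ Set.Icc 0 1 := fun r hr => hr.1
  have hinf_nonneg : ∀ w : ℝ, 0 ≤ w → w ≤ 1 → 0 ≤ infIcc f 0 w := by
    intro w hw0 hw1
    have hne : (f '' Set.Icc (0:ℝ) w).Nonempty := ⟨f 0, 0, ⟨le_refl 0, hw0⟩, rfl⟩
    refine le_csInf hne ?_
    rintro y ⟨x, hx, rfl⟩
    exact hf_nonneg x ⟨hx.1, le_trans hx.2 hw1⟩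
  have h0A : (0:ℝ) ∈ A := by
    refine ⟨⟨le_refl 0, zero_le_one⟩, ⟨hs.1, ?_⟩, ⟨ht.1, ?_⟩⟩
    · rw [hfl0]; exact hinf_nonneg s hs.1 hs.2
    · rw [hfl0]; exact hinf_nonneg t ht.1 ht.2
  have hAne : A.Nonempty := ⟨0, h0A⟩
  have hbdd : BddAbove A := ⟨1, fun r hr => (hAsub hr).2⟩
  have hmca : mca f fl s t = sSup A := rfl
  have hm0 : 0 ≤ mca f fl s t := hmca ▸ le_csSup hbdd h0A
  have hm1 : mca f fl s t ≤ 1 := hmca ▸ csSup_le hAne (fun r hr => (hAsub hr).2)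
  have hms : mca f fl s t ≤ s := hmca ▸ csSup_le hAne (fun r hr => hr.2.1.1)
  have hmt : mca f fl s t ≤ t := hmca ▸ csSup_le hAne (fun r hr => hr.2.2.1)
  refine ⟨h0A, ⟨⟨hm0, hm1⟩, ⟨hms, ?_⟩, ⟨hmt, ?_⟩⟩, ?_⟩
  · exact hmca ▸ fl_sSup_le f fl hf_left hfl0 hf_nonneg A hAsub h0A s hs.2
      (fun r hr => hr.2.1)
  · exact hmca ▸ fl_sSup_le f fl hf_left hfl0 hf_nonneg A hAsub h0A t ht.2
      (fun r hr => hr.2.2)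
  · intro r hr
    have hrm : r ≤ mca f fl s t := hmca ▸ le_csSup hbdd hr
    refine ⟨hrm, le_trans hr.2.1.2 ?_⟩
    apply csInf_le_csInf (aux_bddBelow f hf_nonneg r s (hAsub hr).1 hs.2)
    · exact ⟨f r, r, ⟨le_refl r, hrm⟩, rfl⟩
    · exact Set.image_mono (Set.Icc_subset_Icc (le_refl r) hms)
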